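/- arXiv:1705.09043 — 3 statements merged into one kernel-verified Lean document; each statement's English description precedes it below -/
import Mathlib

section
/- Let u : C → R be nonnegative and concave and v : C → R be positive and convex on a convex set C ⊆ R^n. Then the function D(λ) = sup_{x ∈ C} (u(x) − λ v(x)) is convex and strictly monotonically decreasing in λ on the set where the supremum is finite and attained, provided v is bounded below by a positive constant on C. -/
/-- Dinkelbach auxiliary function: for `u` nonnegative concave, `v` positive
convex and bounded below by a positive constant on a nonempty convex set `C`,
if for every `λ` the supremum `D(λ) = max_{x ∈ C} (u x − λ v x)` is attained,
then `D` is convex and strictly monotonically decreasing. -/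
theorem dinkelbach_aux_convex_strictAnti
    {n : ℕ} (C : Set (Fin n → ℝ)) (hC : Convex ℝ C) (hne : C.Nonempty)
    (u v : (Fin n → ℝ) → ℝ)
    (hu0 : ∀ x ∈ C, 0 ≤ u x) (huconc : ConcaveOn ℝ C u)
    (hv0 : ∀ x ∈ C, 0 < v x) (hvconv : ConvexOn ℝ C v)
    (m : ℝ) (hm : 0 < m) (hvm : ∀ x ∈ C, m ≤ v x)
    (D : ℝ → ℝ)
    (hD : ∀ l : ℝ, ∃ x ∈ C,
        D l = u x - l * v x ∧ ∀ y ∈ C, u y - l * v y ≤ u x - l * v x) :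
    ConvexOn ℝ Set.univ D ∧ StrictAnti D := by
  constructor
  · refine ⟨convex_univ, ?_⟩
    intro l1 _ l2 _ a b ha hb hab
    obtain ⟨x, hxC, hxD, hxmax⟩ := hD (a * l1 + b * l2)
    obtain ⟨x1, hx1C, hx1D, hx1max⟩ := hD l1
    obtain ⟨x2, hx2C, hx2D, hx2max⟩ := hD l2
    have h1 : u x - l1 * v x ≤ D l1 := hx1D ▸ hx1max x hxC
    have h2 : u x - l2 * v x ≤ D l2 := hx2D ▸ hx2max x hxC
    have : D (a * l1 + b * l2) = a * (u x - l1 * v x) + b * (u x - l2 * v x) := by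
      rw [hxD]; linear_combination (-(u x)) * hab
    simp only [smul_eq_mul]
    rw [this]
    have := mul_le_mul_of_nonneg_left h1 ha
    have := mul_le_mul_of_nonneg_left h2 hb
    linarith
  · intro l1 l2 hl
    obtain ⟨x1, hx1C, hx1D, hx1max⟩ := hD l1
    obtain ⟨x2, hx2C, hx2D, hx2max⟩ := hD l2
    have hv2 : m ≤ v x2 := hvm x2 hx2C
    have : u x2 - l2 * v x2 < u x2 - l1 * v x2 := by nlinarith
    calc D l2 = u x2 - l2 * v x2 := hx2D
      _ < u x2 - l1 * v x2 := this
      _ ≤ u x1 - l1 * v x1 := hx1max x2 hx2C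
      _ = D l1 := hx1D.symm
end

section
/- Let u : C → R be nonnegative and v : C → R be positive on a set C. A point x* ∈ C maximizes u(x)/v(x) over C with maximal value λ* = u(x*)/v(x*) if and only if max_{x ∈ C} (u(x) − λ* v(x)) = 0 and the maximum is attained at x*. -/
/-- Dinkelbach's fundamental equivalence for fractional programming:
for `u ≥ 0`, `v > 0` on a nonempty set `C` and `x* ∈ C` with
`λ* = u(x*)/v(x*)`, the point `x*` maximizes `u/v` over `C` iff
`max_{x ∈ C} (u x − λ* v x) = 0` with the maximum attained at `x*`. -/
theorem dinkelbach_equivalence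
    {X : Type*} (C : Set X) (hne : C.Nonempty) (u v : X → ℝ)
    (hu : ∀ x ∈ C, 0 ≤ u x) (hv : ∀ x ∈ C, 0 < v x)
    (xs : X) (hxs : xs ∈ C) :
    (∀ x ∈ C, u x / v x ≤ u xs / v xs) ↔
      (u xs - (u xs / v xs) * v xs = 0 ∧
        ∀ x ∈ C, u x - (u xs / v xs) * v x ≤ 0) := by
  have hvs := hv xs hxs
  constructor
  · intro h
    refine ⟨by field_simp; ring, fun x hx => ?_⟩
    have := (div_le_div_iff₀ (hv x hx) hvs).mp (h x hx)
    have hx' : u x ≤ u xs / v xs * v x := by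
      rw [div_mul_eq_mul_div, le_div_iff₀ hvs]
      linarith [this]
    linarith
  · rintro ⟨-, h⟩ x hx
    have := h x hx
    rw [div_le_div_iff₀ (hv x hx) hvs]
    have : u x ≤ u xs / v xs * v x := by linarith
    calc u x * v xs ≤ (u xs / v xs * v x) * v xs := by nlinarith [hvs]
      _ = u xs * v x := by field_simp
end

section
/- Let f(λ) = max_{x ∈ X} min_{1 ≤ k ≤ K} (u_k(x) − λ v_k(x)) where X is a nonempty compact set, u_k continuous and nonnegative, v_k continuous and positive on X. Then f is non-increasing in λ, continuous, and f(λ*) = 0 where λ* = max_{x ∈ X} min_k u_k(x)/v_k(x); moreover f(λ) > 0 for λ < λ* and f(λ) < 0 for λ > λ*. -/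
open Finset

private lemma dink_contOn_inf' {E : Type*} [TopologicalSpace E] {s : Set E}
    {ι : Type*} {t : Finset ι} (hne : t.Nonempty) {F : ι → E → ℝ}
    (h : ∀ k ∈ t, ContinuousOn (F k) s) :
    ContinuousOn (fun x => t.inf' hne (fun k => F k x)) s :=
  fun x hx => Filter.Tendsto.finset_inf'_nhds_apply hne (fun i hi => h i hi x hx)

/-- Generalized Dinkelbach auxiliary function for max-min fractional
programming: on a nonempty compact set `X`, with `u_k` continuous nonnegative
and `v_k` continuous positive, the function
`f(λ) = max_{x ∈ X} min_k (u_k x − λ v_k x)` is non-increasing and continuous,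
satisfies `f(λ*) = 0` at the optimal max-min ratio
`λ* = max_{x ∈ X} min_k u_k x / v_k x`, and `f(λ) > 0` for `λ < λ*`,
`f(λ) < 0` for `λ > λ*`. -/
theorem generalized_dinkelbach_aux
    {E : Type*} [TopologicalSpace E] (X : Set E) (hXne : X.Nonempty)
    (hXc : IsCompact X) (K : ℕ) (hK : 0 < K)
    (u v : Fin K → E → ℝ)
    (hu : ∀ k, ContinuousOn (u k) X) (hv : ∀ k, ContinuousOn (v k) X)
    (hu0 : ∀ k, ∀ x ∈ X, 0 ≤ u k x) (hv0 : ∀ k, ∀ x ∈ X, 0 < v k x)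
    (f : ℝ → ℝ)
    (hf : ∀ l : ℝ, f l = sSup ((fun x => ⨅ k, (u k x - l * v k x)) '' X))
    (lstar : ℝ)
    (hlstar : lstar = sSup ((fun x => ⨅ k, u k x / v k x) '' X)) :
    Antitone f ∧ Continuous f ∧ f lstar = 0 ∧
      (∀ l < lstar, 0 < f l) ∧ ∀ l > lstar, f l < 0 := by
  haveI : Nonempty (Fin K) := ⟨⟨0, hK⟩⟩
  have hne : (univ : Finset (Fin K)).Nonempty := univ_nonempty
  set g : ℝ → E → ℝ := fun l x => univ.inf' hne (fun k => u k x - l * v k x) with hg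
  -- rewrite f in terms of g
  have hfg : ∀ l, f l = sSup (g l '' X) := by
    intro l
    rw [hf l]
    congr 1
    ext y
    constructor <;> rintro ⟨x, hx, rfl⟩ <;> exact ⟨x, hx, by
      simp [hg, inf'_univ_eq_ciInf]⟩
  -- continuity of g l on X
  have hgc : ∀ l, ContinuousOn (g l) X := by
    intro l
    exact dink_contOn_inf' hne fun k _ =>
      (hu k).sub (continuousOn_const.mul (hv k))
  -- attainment of f l
  have hfa : ∀ l, ∃ x ∈ X, f l = g l x ∧ ∀ y ∈ X, g l y ≤ g l x := by
    intro l
    obtain ⟨x, hx, hsup, hle⟩ := hXc.exists_sSup_image_eq_and_ge hXne (hgc l)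
    exact ⟨x, hx, by rw [hfg l, hsup], hle⟩
  -- upper and lower bounds M and m for v on X
  set M : ℝ := univ.inf' hne (fun _ => (0:ℝ)) + univ.sup' hne (fun k => sSup (v k '' X)) with hM
  have hMdef : M = univ.sup' hne (fun k => sSup (v k '' X)) := by simp [hM]
  have hvM : ∀ k, ∀ x ∈ X, v k x ≤ M := by
    intro k x hx
    rw [hMdef]
    refine le_trans ?_ (Finset.le_sup' (fun k => sSup (v k '' X)) (mem_univ k))
    exact le_csSup ((hXc.image_of_continuousOn (hv k)).bddAbove) ⟨x, hx, rfl⟩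
  set m : ℝ := univ.inf' hne (fun k => sInf (v k '' X)) with hm
  have hvm : ∀ k, ∀ x ∈ X, m ≤ v k x := by
    intro k x hx
    refine le_trans (Finset.inf'_le _ (mem_univ k)) ?_
    exact csInf_le ((hXc.image_of_continuousOn (hv k)).bddBelow) ⟨x, hx, rfl⟩
  have hm0 : 0 < m := by
    obtain ⟨k, -, hk⟩ := Finset.exists_mem_eq_inf' hne (fun k => sInf (v k '' X))
    rw [hm, hk]
    obtain ⟨x, hx, hmin⟩ := hXc.exists_sInf_image_eq hXne (hv k)
    rw [hmin]; exact hv0 k x hx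
  have hM0 : 0 < M := by
    obtain ⟨x0, hx0⟩ := hXne
    exact lt_of_lt_of_le hm0 ((hvm ⟨0, hK⟩ x0 hx0).trans (hvM ⟨0, hK⟩ x0 hx0))
  -- pointwise bounds on g
  have hgmono : ∀ l l' : ℝ, l ≤ l' → ∀ x ∈ X, g l' x ≤ g l x := by
    intro l l' hll x hx
    refine Finset.le_inf' hne _ (fun k _ => ?_)
    have h1 : g l' x ≤ u k x - l' * v k x := Finset.inf'_le _ (mem_univ k)
    have := mul_le_mul_of_nonneg_right hll (hv0 k x hx).le
    linarith
  have hgup : ∀ l l' : ℝ, l ≤ l' → ∀ x ∈ X, g l x ≤ g l' x + (l' - l) * M := by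
    intro l l' hll x hx
    obtain ⟨k, -, hk⟩ := Finset.exists_mem_eq_inf' hne (fun k => u k x - l' * v k x)
    have h1 : g l x ≤ u k x - l * v k x := Finset.inf'_le _ (mem_univ k)
    have h2 : (l' - l) * v k x ≤ (l' - l) * M :=
      mul_le_mul_of_nonneg_left (hvM k x hx) (by linarith)
    have : g l' x = u k x - l' * v k x := hk
    nlinarith
  have hglow : ∀ l l' : ℝ, l ≤ l' → ∀ x ∈ X, g l' x + (l' - l) * m ≤ g l x := by
    intro l l' hll x hx
    refine Finset.le_inf' hne _ (fun k _ => ?_)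
    have h1 : g l' x ≤ u k x - l' * v k x := Finset.inf'_le _ (mem_univ k)
    have h2 : (l' - l) * m ≤ (l' - l) * v k x :=
      mul_le_mul_of_nonneg_left (hvm k x hx) (by linarith)
    nlinarith
  -- corresponding bounds on f
  have hflow : ∀ l l' : ℝ, l ≤ l' → f l' + (l' - l) * m ≤ f l := by
    intro l l' hll
    obtain ⟨x', hx', hfx', -⟩ := hfa l'
    obtain ⟨x, hx, hfx, hmax⟩ := hfa l
    calc f l' + (l' - l) * m = g l' x' + (l' - l) * m := by rw [hfx']
      _ ≤ g l x' := hglow l l' hll x' hx'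
      _ ≤ g l x := hmax x' hx'
      _ = f l := hfx.symm
  have hfup : ∀ l l' : ℝ, l ≤ l' → f l ≤ f l' + (l' - l) * M := by
    intro l l' hll
    obtain ⟨x, hx, hfx, -⟩ := hfa l
    obtain ⟨x', hx', hfx', hmax'⟩ := hfa l'
    calc f l = g l x := hfx
      _ ≤ g l' x + (l' - l) * M := hgup l l' hll x hx
      _ ≤ g l' x' + (l' - l) * M := by linarith [hmax' x hx]
      _ = f l' + (l' - l) * M := by rw [hfx']
  have hanti : Antitone f := by
    intro l l' hll
    have := hflow l l' hll
    nlinarith [mul_nonneg (sub_nonneg.2 hll) hm0.le]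
  -- continuity via Lipschitz
  have hcont : Continuous f := by
    refine LipschitzWith.continuous (K := Real.toNNReal M) ?_
    refine LipschitzWith.of_dist_le_mul fun a b => ?_
    rw [Real.dist_eq, Real.dist_eq]
    have hcoe : (Real.toNNReal M : ℝ) = M := Real.coe_toNNReal M hM0.le
    rw [hcoe]
    rcases le_total a b with h | h
    · have h1 := hfup a b h
      have h2 := hanti h
      rw [abs_of_nonneg (by linarith), abs_of_nonpos (by linarith)]
      linarith
    · have h1 := hfup b a h
      have h2 := hanti h
      rw [abs_of_nonpos (by linarith), abs_of_nonneg (by linarith)]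
      linarith
  -- the ratio function
  set r : E → ℝ := fun x => univ.inf' hne (fun k => u k x / v k x) with hr
  have hrc : ContinuousOn r X :=
    dink_contOn_inf' hne fun k _ => (hu k).div (hv k) (fun x hx => (hv0 k x hx).ne')
  have hlr : lstar = sSup (r '' X) := by
    rw [hlstar]
    congr 1
    ext y
    constructor <;> rintro ⟨x, hx, rfl⟩ <;> exact ⟨x, hx, by
      simp [hr, inf'_univ_eq_ciInf]⟩
  obtain ⟨xs, hxs, hrxs, hrmax⟩ := hXc.exists_sSup_image_eq_and_ge hXne hrc
  have hxseq : lstar = r xs := by rw [hlr, hrxs]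
  -- g lstar ≤ 0 on X
  have hgle : ∀ x ∈ X, g lstar x ≤ 0 := by
    intro x hx
    obtain ⟨k, -, hk⟩ := Finset.exists_mem_eq_inf' hne (fun k => u k x / v k x)
    have hrx : r x ≤ lstar := by rw [hxseq]; exact hrmax x hx
    have : u k x / v k x ≤ lstar := by rw [← hk]; exact hrx
    have hub : u k x ≤ lstar * v k x := (div_le_iff₀ (hv0 k x hx)).mp this
    calc g lstar x ≤ u k x - lstar * v k x := Finset.inf'_le _ (mem_univ k)
      _ ≤ 0 := by linarith
  -- g lstar xs ≥ 0
  have hgge : 0 ≤ g lstar xs := by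
    refine Finset.le_inf' hne _ (fun k _ => ?_)
    have h1 : r xs ≤ u k xs / v k xs := Finset.inf'_le _ (mem_univ k)
    have h2 : lstar ≤ u k xs / v k xs := hxseq ▸ h1
    have := (le_div_iff₀ (hv0 k xs hxs)).mp h2
    linarith
  have hf0 : f lstar = 0 := by
    obtain ⟨x, hx, hfx, hmax⟩ := hfa lstar
    have h1 : f lstar ≤ 0 := by rw [hfx]; exact hgle x hx
    have h2 : 0 ≤ f lstar := by
      rw [hfx]; exact le_trans hgge (hmax xs hxs)
    linarith
  refine ⟨hanti, hcont, hf0, ?_, ?_⟩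
  · intro l hl
    have := hflow l lstar hl.le
    nlinarith [mul_pos (sub_pos.2 hl) hm0]
  · intro l hl
    have := hflow lstar l hl.le
    nlinarith [mul_pos (sub_pos.2 hl) hm0]
end
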